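/- Let f_t be the N(0,t) density, 0 < c < K < 1, a(t) = K²t, and h_t(y) = (1/(1−c))(f_t(y) − c f_{a(t)}(y)). Let H̃_t have density h_t. Then for every x ∈ ℝ and every t > 0, ∂/∂t E[(H̃_t − x)^+] = (1/(2(1−c)))(f_t(x) − cK² f_{K²t}(x)) > 0; in particular the family (h_t)_{t>0} is increasing in convex order. -/

import Mathlib

open Real MeasureTheory

/-- The centered Gaussian density with variance `t`. -/
noncomputable def gaussDensity (t y : ℝ) : ℝ :=
  Real.exp (-(y ^ 2) / (2 * t)) / Real.sqrt (2 * Real.pi * t)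

/-- The mixture-complement density `h_t` for the fake Brownian motion. -/
noncomputable def fakeDensity (c K t y : ℝ) : ℝ :=
  (1 / (1 - c)) * (gaussDensity t y - c * gaussDensity (K ^ 2 * t) y)

noncomputable def stdGauss (u : ℝ) : ℝ := Real.exp (-(u^2)/2) / Real.sqrt (2*Real.pi)

lemma stdGauss_pos (u : ℝ) : 0 < stdGauss u :=
  div_pos (exp_pos _) (Real.sqrt_pos.2 (by positivity))

lemma continuous_stdGauss : Continuous stdGauss := by
  unfold stdGauss; fun_prop

lemma integrable_stdGauss : Integrable stdGauss := by
  unfold stdGauss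
  apply Integrable.div_const
  have : ∀ u : ℝ, Real.exp (-(u^2)/2) = Real.exp (-(2⁻¹ : ℝ) * u^2) := by
    intro u; ring_nf
  simp_rw [this]
  exact integrable_exp_neg_mul_sq (by norm_num)

lemma integrable_mul_stdGauss : Integrable (fun u => u * stdGauss u) := by
  unfold stdGauss
  have : ∀ u : ℝ, u * (Real.exp (-(u^2)/2) / Real.sqrt (2*Real.pi))
      = (u * Real.exp (-(2⁻¹:ℝ) * u^2)) / Real.sqrt (2*Real.pi) := by
    intro u; ring_nf
  simp_rw [this]
  exact (integrable_mul_exp_neg_mul_sq (by norm_num)).div_const _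

noncomputable def tailG (z : ℝ) : ℝ := ∫ u in Set.Ioi z, stdGauss u

lemma tailG_eq (z : ℝ) : tailG z = (∫ u, stdGauss u) - ((∫ u in Set.Iic (0:ℝ), stdGauss u) + ∫ u in (0:ℝ)..z, stdGauss u) := by
  have h1 : (∫ u in Set.Iic z, stdGauss u) + tailG z = ∫ u, stdGauss u :=
    intervalIntegral.integral_Iic_add_Ioi integrable_stdGauss.integrableOn integrable_stdGauss.integrableOn
  have h2 : (∫ u in Set.Iic z, stdGauss u) - (∫ u in Set.Iic (0:ℝ), stdGauss u)
      = ∫ u in (0:ℝ)..z, stdGauss u :=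
    intervalIntegral.integral_Iic_sub_Iic integrable_stdGauss.integrableOn integrable_stdGauss.integrableOn
  linarith

lemma hasDerivAt_tailG (z : ℝ) : HasDerivAt tailG (-(stdGauss z)) z := by
  have h : HasDerivAt (fun z => ∫ u in (0:ℝ)..z, stdGauss u) (stdGauss z) z := by
    refine intervalIntegral.integral_hasDerivAt_right
      integrable_stdGauss.intervalIntegrable
      continuous_stdGauss.aestronglyMeasurable.stronglyMeasurableAtFilter
      continuous_stdGauss.continuousAt
  have := ((hasDerivAt_const z ((∫ u, stdGauss u) - (∫ u in Set.Iic (0:ℝ), stdGauss u))).sub h)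
  simp only [zero_sub] at this
  refine HasDerivAt.congr_of_eventuallyEq this ?_
  filter_upwards with w
  simp only [tailG_eq, Pi.sub_apply]; ring
lemma gaussDensity_eq {t : ℝ} (ht : 0 < t) (y : ℝ) :
    gaussDensity t y = stdGauss (y / Real.sqrt t) / Real.sqrt t := by
  have hst : (0:ℝ) < Real.sqrt t := Real.sqrt_pos.2 ht
  have hsq : Real.sqrt t ^ 2 = t := Real.sq_sqrt ht.le
  have h1 : -((y / Real.sqrt t)^2)/2 = -(y^2)/(2*t) := by
    rw [div_pow, hsq]; ring
  unfold gaussDensity stdGauss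
  rw [h1, Real.sqrt_mul (by positivity) t, div_div]

lemma gaussDensity_pos {t : ℝ} (ht : 0 < t) (y : ℝ) : 0 < gaussDensity t y := by
  rw [gaussDensity_eq ht]
  exact div_pos (stdGauss_pos _) (Real.sqrt_pos.2 ht)

lemma integrable_gaussDensity {t : ℝ} (ht : 0 < t) : Integrable (gaussDensity t) := by
  unfold gaussDensity
  apply Integrable.div_const
  have : ∀ y : ℝ, Real.exp (-(y^2) / (2*t)) = Real.exp (-(2*t)⁻¹ * y^2) := by
    intro y; congr 1; field_simp
  simp_rw [this]
  exact integrable_exp_neg_mul_sq (by positivity)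

lemma integrable_mul_gaussDensity {t : ℝ} (ht : 0 < t) :
    Integrable (fun y => y * gaussDensity t y) := by
  unfold gaussDensity
  have : ∀ y : ℝ, y * (Real.exp (-(y^2)/(2*t)) / Real.sqrt (2*Real.pi*t))
      = (y * Real.exp (-(2*t)⁻¹ * y^2)) / Real.sqrt (2*Real.pi*t) := by
    intro y
    rw [mul_div_assoc]
    congr 2
    field_simp
  simp_rw [this]
  exact (integrable_mul_exp_neg_mul_sq (by positivity)).div_const _

lemma integrable_abs_mul_gaussDensity {t : ℝ} (ht : 0 < t) :
    Integrable (fun y => |y| * gaussDensity t y) := by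
  have := (integrable_mul_gaussDensity ht).abs
  refine this.congr ?_
  filter_upwards with y
  rw [abs_mul, abs_of_pos (gaussDensity_pos ht y)]

lemma integrable_call_gaussDensity {t : ℝ} (ht : 0 < t) (x : ℝ) :
    Integrable (fun y => max (y - x) 0 * gaussDensity t y) := by
  refine Integrable.mono' ((integrable_abs_mul_gaussDensity ht).add
    ((integrable_gaussDensity ht).const_mul |x|)) ?_ ?_
  · have h1 : Continuous (gaussDensity t) := by unfold gaussDensity; fun_prop
    exact (((continuous_id.sub continuous_const).max continuous_const).mul h1).aestronglyMeasurable
  · filter_upwards with y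
    have hg := gaussDensity_pos ht y
    simp only [Pi.add_apply, Real.norm_eq_abs, abs_mul, abs_of_pos hg]
    have : |max (y - x) 0| ≤ |y| + |x| := by
      rw [abs_of_nonneg (le_max_right _ _)]
      rcases le_total (y - x) 0 with h | h
      · rw [max_eq_right h]
        positivity
      · rw [max_eq_left h]
        calc y - x ≤ |y - x| := le_abs_self _
          _ ≤ |y| + |x| := abs_sub _ _
    rw [abs_of_nonneg (le_max_right (y-x) 0)]
    calc max (y - x) 0 * gaussDensity t y ≤ (|y| + |x|) * gaussDensity t y := by
          apply mul_le_mul_of_nonneg_right _ hg.le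
          exact le_trans (le_abs_self _) this
      _ = |y| * gaussDensity t y + |x| * gaussDensity t y := by ring

lemma integral_Ioi_mul_gaussDensity {t : ℝ} (ht : 0 < t) (x : ℝ) :
    ∫ y in Set.Ioi x, y * gaussDensity t y = t * gaussDensity t x := by
  have hderiv : ∀ y ∈ Set.Ioi x, HasDerivAt (fun y => -t * gaussDensity t y)
      (y * gaussDensity t y) y := by
    intro y _
    unfold gaussDensity
    have h1 : HasDerivAt (fun y : ℝ => -(y^2)/(2*t)) (-y/t) y := by
      have := ((hasDerivAt_pow 2 y).neg).div_const (2*t)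
      refine this.congr_deriv ?_
      field_simp; ring
    have h2 := ((h1.exp).div_const (Real.sqrt (2*Real.pi*t))).const_mul (-t)
    refine h2.congr_deriv ?_
    field_simp
  have htend : Filter.Tendsto (fun y => -t * gaussDensity t y) Filter.atTop (nhds 0) := by
    have : Filter.Tendsto (fun y : ℝ => Real.exp (-(y^2)/(2*t))) Filter.atTop (nhds 0) := by
      apply Real.tendsto_exp_atBot.comp
      have : Filter.Tendsto (fun y : ℝ => y^2) Filter.atTop Filter.atTop :=
        Filter.tendsto_pow_atTop (by norm_num)
      apply Filter.Tendsto.atBot_div_const (by positivity)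
      exact Filter.tendsto_neg_atBot_iff.mpr this
    have h2 : Filter.Tendsto (fun y => gaussDensity t y) Filter.atTop (nhds 0) := by
      unfold gaussDensity
      simpa using this.div_const (Real.sqrt (2*Real.pi*t))
    simpa using h2.const_mul (-t)
  have := integral_Ioi_of_hasDerivAt_of_tendsto
    (Continuous.continuousWithinAt (by unfold gaussDensity; fun_prop))
    hderiv ((integrable_mul_gaussDensity ht).integrableOn) htend
  rw [this]; ring

lemma integral_Ioi_gaussDensity {t : ℝ} (ht : 0 < t) (x : ℝ) :
    ∫ y in Set.Ioi x, gaussDensity t y = tailG (x / Real.sqrt t) := by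
  have hst : (0:ℝ) < Real.sqrt t := Real.sqrt_pos.2 ht
  have h : ∀ y : ℝ, gaussDensity t y = (Real.sqrt t)⁻¹ • stdGauss ((Real.sqrt t)⁻¹ * y) := by
    intro y
    rw [gaussDensity_eq ht, smul_eq_mul, inv_mul_eq_div, div_eq_div_iff (Real.sqrt_pos.2 ht).ne' (Real.sqrt_pos.2 ht).ne', inv_mul_eq_div]
  simp_rw [h]
  rw [integral_smul, MeasureTheory.integral_comp_mul_left_Ioi _ _ (inv_pos.2 hst)]
  rw [smul_smul, inv_inv, inv_mul_cancel₀ hst.ne', one_smul, inv_mul_eq_div]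
  rfl

noncomputable def callG (x t : ℝ) : ℝ :=
  Real.sqrt t * stdGauss (x / Real.sqrt t) - x * tailG (x / Real.sqrt t)

lemma call_eq {t : ℝ} (ht : 0 < t) (x : ℝ) :
    ∫ y : ℝ, max (y - x) 0 * gaussDensity t y = callG x t := by
  have hst : (0:ℝ) < Real.sqrt t := Real.sqrt_pos.2 ht
  have hsplit := intervalIntegral.integral_Iic_add_Ioi (b := x)
    ((integrable_call_gaussDensity ht x).integrableOn)
    ((integrable_call_gaussDensity ht x).integrableOn)
  have hIic : ∫ y in Set.Iic x, max (y - x) 0 * gaussDensity t y = 0 := by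
    apply MeasureTheory.setIntegral_eq_zero_of_forall_eq_zero
    intro y hy
    rw [max_eq_right (by simp at hy; linarith), zero_mul]
  have hIoi : ∫ y in Set.Ioi x, max (y - x) 0 * gaussDensity t y
      = (∫ y in Set.Ioi x, y * gaussDensity t y) - x * ∫ y in Set.Ioi x, gaussDensity t y := by
    rw [← MeasureTheory.integral_const_mul, ← MeasureTheory.integral_sub
      ((integrable_mul_gaussDensity ht).integrableOn)
      (((integrable_gaussDensity ht).integrableOn).const_mul x)]
    apply MeasureTheory.setIntegral_congr_fun measurableSet_Ioi
    intro y hy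
    simp only
    rw [max_eq_left (by simp at hy; linarith)]
    ring
  rw [← hsplit, hIic, zero_add, hIoi, integral_Ioi_mul_gaussDensity ht,
    integral_Ioi_gaussDensity ht]
  unfold callG
  rw [gaussDensity_eq ht]
  have hsq : Real.sqrt t ^ 2 = t := Real.sq_sqrt ht.le
  field_simp
  nlinarith [stdGauss_pos (x / Real.sqrt t)]

lemma hasDerivAt_stdGauss (u : ℝ) : HasDerivAt stdGauss (-u * stdGauss u) u := by
  have h1 : HasDerivAt (fun u : ℝ => -(u^2)/2) (-u) u := by
    have := ((hasDerivAt_pow 2 u).neg).div_const 2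
    refine this.congr_deriv ?_
    ring
  have h2 := (h1.exp).div_const (Real.sqrt (2*Real.pi))
  refine h2.congr_deriv ?_
  unfold stdGauss
  ring

lemma hasDerivAt_callG {t : ℝ} (ht : 0 < t) (x : ℝ) :
    HasDerivAt (callG x) (gaussDensity t x / 2) t := by
  have hst : (0:ℝ) < Real.sqrt t := Real.sqrt_pos.2 ht
  have hsq : Real.sqrt t ^ 2 = t := Real.sq_sqrt ht.le
  set z := x / Real.sqrt t with hz
  have hs : HasDerivAt Real.sqrt (1 / (2 * Real.sqrt t)) t := Real.hasDerivAt_sqrt ht.ne'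
  have hr : HasDerivAt (fun s : ℝ => x / Real.sqrt s) (-x / (2 * t * Real.sqrt t)) t := by
    have := (hs.inv hst.ne').const_mul x
    refine this.congr_deriv ?_
    rw [hsq]
    field_simp
  have h1 : HasDerivAt (fun s : ℝ => stdGauss (x / Real.sqrt s))
      ((-z * stdGauss z) * (-x / (2 * t * Real.sqrt t))) t :=
    by have := (hasDerivAt_stdGauss z).comp t hr; exact this
  have h2 : HasDerivAt (fun s : ℝ => tailG (x / Real.sqrt s))
      ((-(stdGauss z)) * (-x / (2 * t * Real.sqrt t))) t :=
    by have := (hasDerivAt_tailG z).comp t hr; exact this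
  have h3 := (hs.mul h1).sub (h2.const_mul x)
  have heq : (fun s => Real.sqrt s * stdGauss (x / Real.sqrt s)
      - x * tailG (x / Real.sqrt s)) = callG x := rfl
  replace h3 : HasDerivAt (callG x) _ t := h3
  refine h3.congr_deriv ?_
  rw [gaussDensity_eq ht, hz]
  field_simp
  ring
/-- The call function `t ↦ E[(H̃_t − x)⁺]` of the density `h_t` is differentiable in `t`
with positive derivative `(1/(2(1−c)))(f_t(x) − cK² f_{K²t}(x))`; in particular the family
`(h_t)_{t>0}` is increasing in convex order (its call functions are nondecreasing in `t`). -/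
theorem fakeDensity_call_hasDerivAt {c K : ℝ} (hc : 0 < c) (hcK : c < K) (hK : K < 1) :
    (∀ x : ℝ, ∀ t > (0 : ℝ),
      HasDerivAt (fun s => ∫ y : ℝ, max (y - x) 0 * fakeDensity c K s y)
        ((1 / (2 * (1 - c))) * (gaussDensity t x - c * K ^ 2 * gaussDensity (K ^ 2 * t) x)) t ∧
      0 < (1 / (2 * (1 - c))) * (gaussDensity t x - c * K ^ 2 * gaussDensity (K ^ 2 * t) x)) ∧
    ∀ x : ℝ, MonotoneOn (fun s => ∫ y : ℝ, max (y - x) 0 * fakeDensity c K s y)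
      (Set.Ioi 0) := by
  have hK0 : 0 < K := hc.trans hcK
  have h1c : 0 < 1 - c := by linarith
  have hmain : ∀ x : ℝ, ∀ t > (0 : ℝ),
      HasDerivAt (fun s => ∫ y : ℝ, max (y - x) 0 * fakeDensity c K s y)
        ((1 / (2 * (1 - c))) * (gaussDensity t x - c * K ^ 2 * gaussDensity (K ^ 2 * t) x)) t ∧
      0 < (1 / (2 * (1 - c))) * (gaussDensity t x - c * K ^ 2 * gaussDensity (K ^ 2 * t) x) := by
    intro x t ht
    have hKt : 0 < K ^ 2 * t := by positivity
    constructor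
    · -- derivative
      have hfeq : ∀ s > (0:ℝ), (∫ y : ℝ, max (y - x) 0 * fakeDensity c K s y)
          = (1 / (1 - c)) * (callG x s - c * callG x (K ^ 2 * s)) := by
        intro s hs
        have hKs : 0 < K ^ 2 * s := by positivity
        have h1 : ∀ y : ℝ, max (y - x) 0 * fakeDensity c K s y
            = (1 / (1 - c)) * ((max (y - x) 0 * gaussDensity s y)
              - c * (max (y - x) 0 * gaussDensity (K ^ 2 * s) y)) := by
          intro y; unfold fakeDensity; ring
        simp_rw [h1]
        rw [MeasureTheory.integral_const_mul, MeasureTheory.integral_sub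
          (integrable_call_gaussDensity hs x)
          ((integrable_call_gaussDensity hKs x).const_mul c),
          MeasureTheory.integral_const_mul, call_eq hs, call_eq hKs]
      have hd1 : HasDerivAt (fun s => (1 / (1 - c)) * (callG x s - c * callG x (K ^ 2 * s)))
          ((1 / (2 * (1 - c))) * (gaussDensity t x - c * K ^ 2 * gaussDensity (K ^ 2 * t) x))
          t := by
        have hcomp : HasDerivAt (fun s : ℝ => callG x (K ^ 2 * s))
            (gaussDensity (K ^ 2 * t) x / 2 * K ^ 2) t := by
          have hlin : HasDerivAt (fun s : ℝ => K ^ 2 * s) (K ^ 2) t := by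
            simpa using (hasDerivAt_id t).const_mul (K ^ 2)
          exact (hasDerivAt_callG hKt x).comp t hlin
        have := ((hasDerivAt_callG ht x).sub (hcomp.const_mul c)).const_mul (1 / (1 - c))
        refine this.congr_deriv ?_
        field_simp
      refine hd1.congr_of_eventuallyEq ?_
      filter_upwards [isOpen_Ioi.mem_nhds ht] with s hs
      exact hfeq s hs
    · -- positivity
      have hsqrtKt : Real.sqrt (2 * Real.pi * (K ^ 2 * t)) = K * Real.sqrt (2 * Real.pi * t) := by
        rw [show 2 * Real.pi * (K ^ 2 * t) = K ^ 2 * (2 * Real.pi * t) by ring,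
          Real.sqrt_mul (sq_nonneg K), Real.sqrt_sq hK0.le]
      have hexp : Real.exp (-(x ^ 2) / (2 * (K ^ 2 * t))) ≤ Real.exp (-(x ^ 2) / (2 * t)) := by
        apply Real.exp_le_exp.2
        rw [neg_div, neg_div, neg_le_neg_iff]
        have hK2t : K ^ 2 * t ≤ t := by nlinarith [mul_pos (sub_pos.2 hK) ht, mul_pos (mul_pos hK0 ht) (sub_pos.2 hK)]
        gcongr
      have hS : 0 < Real.sqrt (2 * Real.pi * t) := by positivity
      have key : c * K ^ 2 * gaussDensity (K ^ 2 * t) x < gaussDensity t x := by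
        unfold gaussDensity
        rw [hsqrtKt]
        have heq : c * K ^ 2 * (Real.exp (-(x ^ 2) / (2 * (K ^ 2 * t)))
            / (K * Real.sqrt (2 * Real.pi * t)))
            = (c * K * Real.exp (-(x ^ 2) / (2 * (K ^ 2 * t)))) / Real.sqrt (2 * Real.pi * t) := by
          field_simp
        rw [heq, div_lt_div_iff_of_pos_right hS]
        have hE2 := Real.exp_pos (-(x ^ 2) / (2 * (K ^ 2 * t)))
        have hcK1 : c * K < 1 := by nlinarith
        nlinarith
      have : 0 < gaussDensity t x - c * K ^ 2 * gaussDensity (K ^ 2 * t) x := by linarith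
      positivity
  refine ⟨hmain, fun x => ?_⟩
  have hsm : StrictMonoOn (fun s => ∫ y : ℝ, max (y - x) 0 * fakeDensity c K s y)
      (Set.Ioi 0) := by
    apply strictMonoOn_of_deriv_pos (convex_Ioi 0)
    · intro s hs
      exact ((hmain x s hs).1.continuousAt).continuousWithinAt
    · intro s hs
      rw [interior_Ioi] at hs
      rw [(hmain x s hs).1.deriv]
      exact (hmain x s hs).2
  exact hsm.monotoneOn
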